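/- Under the assumptions of the previous statement but with the weighted uniform norm ‖f‖_{∞,π} = ess sup (π-x)|f(x)|, one has ‖(π-·)(M - M̃)‖_{L^∞(0,π)} ≤ 2(1 + r√π)·‖(π-·)(N - Ñ)‖_{L^∞(0,π)}. -/

import Mathlib

open Real MeasureTheory intervalIntegral
open Set
open scoped ENNReal NNReal

namespace Stmt15Helpers

lemma lint_shift (f : ℝ → ℝ≥0∞) (s x : ℝ) :
    ∫⁻ t in Set.Ioo s x, f (t - s) = ∫⁻ u in Set.Ioo 0 (x - s), f u := by
  have hmp : MeasurePreserving (fun u : ℝ => u + s) volume volume :=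
    measurePreserving_add_right volume s
  have hemb : MeasurableEmbedding (fun u : ℝ => u + s) :=
    (MeasurableEquiv.addRight s).measurableEmbedding
  have h := hmp.setLIntegral_comp_preimage_emb hemb (fun t => f (t - s)) (Set.Ioo s x)
  simp only [add_sub_cancel_right] at h
  rw [← h, Set.preimage_add_const_Ioo]
  norm_num

lemma lint_reflect (f : ℝ → ℝ≥0∞) (t : ℝ) :
    ∫⁻ s in Set.Ioo 0 t, f (t - s) = ∫⁻ s in Set.Ioo 0 t, f s := by
  have hmp : MeasurePreserving (fun u : ℝ => t - u) volume volume :=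
    Measure.measurePreserving_sub_left volume t
  have hemb : MeasurableEmbedding (fun u : ℝ => t - u) :=
    (MeasurableEquiv.subLeft t).measurableEmbedding
  have h := hmp.setLIntegral_comp_preimage_emb hemb f (Set.Ioo 0 t)
  rw [← h, Set.preimage_const_sub_Ioo]
  norm_num

lemma lint_reflect2 (f g : ℝ → ℝ≥0∞) (t : ℝ) :
    ∫⁻ s in Set.Ioo 0 t, f (t - s) * g s = ∫⁻ s in Set.Ioo 0 t, g (t - s) * f s := by
  have h := lint_reflect (fun s => f (t - s) * g s) t
  simp only [sub_sub_cancel] at h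
  rw [← h]
  refine setLIntegral_congr_fun_ae measurableSet_Ioo (Filter.Eventually.of_forall ?_)
  intro s _
  rw [mul_comm]

lemma lint_triangle (F : ℝ → ℝ → ℝ≥0∞) (hF : Measurable (Function.uncurry F)) (x : ℝ) :
    ∫⁻ t in Set.Ioo 0 x, ∫⁻ s in Set.Ioo 0 t, F t s
      = ∫⁻ s in Set.Ioo 0 x, ∫⁻ t in Set.Ioo s x, F t s := by
  have hS : MeasurableSet {p : ℝ × ℝ | 0 < p.2 ∧ p.2 < p.1} :=
    (measurableSet_lt measurable_const measurable_snd).inter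
      (measurableSet_lt measurable_snd measurable_fst)
  set G : ℝ × ℝ → ℝ≥0∞ := {p : ℝ × ℝ | 0 < p.2 ∧ p.2 < p.1}.indicator (Function.uncurry F)
    with hG
  have hGmeas : Measurable G := hF.indicator hS
  have h1 : ∫⁻ t in Set.Ioo 0 x, ∫⁻ s in Set.Ioo 0 t, F t s
      = ∫⁻ t in Set.Ioo 0 x, ∫⁻ s in Set.Ioo 0 x, G (t, s) := by
    refine setLIntegral_congr_fun_ae measurableSet_Ioo (Filter.Eventually.of_forall ?_)
    intro t ht
    have hfun : ∀ s : ℝ, G (t, s) = (Set.Ioo 0 t).indicator (F t) s := by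
      intro s
      simp [hG, Set.indicator_apply, Set.mem_Ioo, Function.uncurry]
    simp_rw [hfun]
    rw [lintegral_indicator measurableSet_Ioo, Measure.restrict_restrict measurableSet_Ioo,
      Set.inter_eq_left.mpr (Set.Ioo_subset_Ioo le_rfl ht.2.le)]
  have h2 : ∫⁻ s in Set.Ioo 0 x, ∫⁻ t in Set.Ioo 0 x, G (t, s)
      = ∫⁻ s in Set.Ioo 0 x, ∫⁻ t in Set.Ioo s x, F t s := by
    refine setLIntegral_congr_fun_ae measurableSet_Ioo (Filter.Eventually.of_forall ?_)
    intro s hs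
    have hfun : ∀ t ∈ Set.Ioo 0 x, G (t, s) = (Set.Ioo s x).indicator (fun t => F t s) t := by
      intro t ht
      by_cases h : s < t
      · have h1 : (t, s) ∈ {p : ℝ × ℝ | 0 < p.2 ∧ p.2 < p.1} := ⟨hs.1, h⟩
        have h2 : t ∈ Set.Ioo s x := ⟨h, ht.2⟩
        simp [hG, Set.indicator_of_mem h1, Set.indicator_of_mem h2, Function.uncurry]
      · have h1 : (t, s) ∉ {p : ℝ × ℝ | 0 < p.2 ∧ p.2 < p.1} := fun hc => h hc.2
        have h2 : t ∉ Set.Ioo s x := fun hc => h hc.1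
        simp [hG, Set.indicator_of_notMem h1, Set.indicator_of_notMem h2]
    rw [setLIntegral_congr_fun_ae measurableSet_Ioo (Filter.Eventually.of_forall hfun),
      lintegral_indicator measurableSet_Ioo, Measure.restrict_restrict measurableSet_Ioo,
      Set.inter_eq_left.mpr (Set.Ioo_subset_Ioo hs.1.le le_rfl)]
  rw [h1, ← h2]
  exact lintegral_lintegral_swap (hGmeas.aemeasurable)

lemma lint_weight (f : ℝ → ℝ≥0∞) (hf : Measurable f) (x : ℝ) :
    ∫⁻ t in Set.Ioo 0 x, ∫⁻ s in Set.Ioo 0 t, f s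
      = ∫⁻ u in Set.Ioo 0 x, ENNReal.ofReal (x - u) * f u := by
  rw [lint_triangle (fun _ s => f s) (hf.comp measurable_snd) x]
  refine setLIntegral_congr_fun_ae measurableSet_Ioo (Filter.Eventually.of_forall ?_)
  intro s _
  rw [setLIntegral_const, Real.volume_Ioo, mul_comm]

lemma lint_conv (f g : ℝ → ℝ≥0∞) (hf : Measurable f) (hg : Measurable g) (x : ℝ) :
    ∫⁻ t in Set.Ioo 0 x, ∫⁻ s in Set.Ioo 0 t, f (t - s) * g s
      = ∫⁻ s in Set.Ioo 0 x, g s * ∫⁻ u in Set.Ioo 0 (x - s), f u := by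
  have hunc : Measurable (Function.uncurry (fun t s : ℝ => f (t - s) * g s)) :=
    (hf.comp (measurable_fst.sub measurable_snd)).mul (hg.comp measurable_snd)
  rw [lint_triangle _ hunc x]
  refine setLIntegral_congr_fun_ae measurableSet_Ioo (Filter.Eventually.of_forall ?_)
  intro s _
  rw [← lint_shift f s x,
    ← lintegral_const_mul (g s) (f := fun t => f (t - s)) (hf.comp (measurable_sub_const s))]
  refine setLIntegral_congr_fun_ae measurableSet_Ioo (Filter.Eventually.of_forall ?_)
  intro t _
  rw [mul_comm]

lemma lint_CS (r : ℝ) (hr : 0 ≤ r) (φ : ℝ → ℝ≥0∞)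
    (hφ : AEMeasurable φ (volume.restrict (Set.Ioo 0 π)))
    (hb : ∫⁻ u in Set.Ioo 0 π, (ENNReal.ofReal (π - u) * φ u) ^ (2 : ℝ)
      ≤ ENNReal.ofReal (r ^ 2))
    {x : ℝ} (hx : x ∈ Set.Ioo 0 π) :
    ∫⁻ u in Set.Ioo 0 x, ENNReal.ofReal (x - u) * φ u
      ≤ ENNReal.ofReal (r * Real.sqrt π) := by
  have hπ : (0 : ℝ) < π := Real.pi_pos
  have hsub : Set.Ioo (0:ℝ) x ⊆ Set.Ioo 0 π := Set.Ioo_subset_Ioo le_rfl hx.2.le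
  have hφx : AEMeasurable φ (volume.restrict (Set.Ioo 0 x)) :=
    hφ.mono_measure (Measure.restrict_mono hsub le_rfl)
  set k : ℝ → ℝ≥0∞ := fun u => ENNReal.ofReal ((x - u) / (π - u)) with hk
  set w : ℝ → ℝ≥0∞ := fun u => ENNReal.ofReal (π - u) * φ u with hw
  have hkm : AEMeasurable k (volume.restrict (Set.Ioo 0 x)) :=
    (ENNReal.measurable_ofReal.comp ((measurable_const.sub measurable_id).div
      (measurable_const.sub measurable_id))).aemeasurable
  have hwm : AEMeasurable w (volume.restrict (Set.Ioo 0 x)) :=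
    (ENNReal.measurable_ofReal.comp (measurable_const.sub measurable_id)).aemeasurable.mul hφx
  have hstep1 : ∫⁻ u in Set.Ioo 0 x, ENNReal.ofReal (x - u) * φ u
      = ∫⁻ u in Set.Ioo 0 x, (k * w) u := by
    refine setLIntegral_congr_fun_ae measurableSet_Ioo (Filter.Eventually.of_forall ?_)
    intro u hu
    have hu2 : u < x := hu.2
    have h1 : (0:ℝ) < π - u := by linarith [hx.2]
    have h2 : ENNReal.ofReal (x - u) = k u * ENNReal.ofReal (π - u) := by
      have h0 : (0:ℝ) ≤ (x - u) / (π - u) := div_nonneg (by linarith) h1.le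
      show ENNReal.ofReal (x - u)
          = ENNReal.ofReal ((x - u) / (π - u)) * ENNReal.ofReal (π - u)
      rw [← ENNReal.ofReal_mul h0, div_mul_cancel₀ _ h1.ne']
    calc ENNReal.ofReal (x - u) * φ u
        = (k u * ENNReal.ofReal (π - u)) * φ u := by rw [← h2]
      _ = (k * w) u := by
          simp only [Pi.mul_apply, hw, mul_assoc]
  rw [hstep1]
  have hconj : Real.HolderConjugate 2 2 := ⟨by norm_num, by norm_num, by norm_num⟩
  have hH := ENNReal.lintegral_mul_le_Lp_mul_Lq (volume.restrict (Set.Ioo 0 x)) hconj hkm hwm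
  refine hH.trans ?_
  have hkint : ∫⁻ u in Set.Ioo 0 x, k u ^ (2:ℝ) ≤ ENNReal.ofReal π := by
    have : ∫⁻ u in Set.Ioo 0 x, k u ^ (2:ℝ) ≤ ∫⁻ _ in Set.Ioo 0 x, 1 := by
      refine setLIntegral_mono' measurableSet_Ioo ?_
      intro u hu
      refine ENNReal.rpow_le_one ?_ (by norm_num)
      rw [hk]
      refine ENNReal.ofReal_le_one.mpr ?_
      have h1 : (0:ℝ) < π - u := by linarith [hu.2, hx.2]
      rw [div_le_one h1]
      linarith [hx.2]
    refine this.trans ?_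
    simp [Real.volume_Ioo]
    exact ENNReal.ofReal_le_ofReal (by linarith [hx.1, hx.2])
  have hwint : ∫⁻ u in Set.Ioo 0 x, w u ^ (2:ℝ) ≤ ENNReal.ofReal (r ^ 2) :=
    (lintegral_mono_set hsub).trans hb
  calc (∫⁻ u in Set.Ioo 0 x, k u ^ (2:ℝ)) ^ (1/(2:ℝ))
        * (∫⁻ u in Set.Ioo 0 x, w u ^ (2:ℝ)) ^ (1/(2:ℝ))
      ≤ (ENNReal.ofReal π) ^ (1/(2:ℝ)) * (ENNReal.ofReal (r ^ 2)) ^ (1/(2:ℝ)) :=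
        mul_le_mul' (ENNReal.rpow_le_rpow hkint (by norm_num))
          (ENNReal.rpow_le_rpow hwint (by norm_num))
    _ = ENNReal.ofReal (r * Real.sqrt π) := by
        rw [ENNReal.ofReal_rpow_of_pos hπ, ENNReal.ofReal_rpow_of_nonneg (by positivity)
          (by norm_num), ← ENNReal.ofReal_mul (by positivity), ← Real.sqrt_eq_rpow]
        congr 1
        rw [← Real.rpow_natCast r 2, ← Real.rpow_mul hr]
        norm_num
        ring

lemma conv_bound {x : ℝ} (K C : ℝ≥0∞) (φ d : ℝ → ℝ≥0∞) (hφ : Measurable φ)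
    (hd : Measurable d)
    (hCd : ∀ᵐ s ∂(volume.restrict (Set.Ioo 0 π)), ENNReal.ofReal (π - s) * d s ≤ C)
    (hCS : ∫⁻ u in Set.Ioo 0 x, ENNReal.ofReal (x - u) * φ u ≤ K)
    (hx : x ∈ Set.Ioo (0:ℝ) π) :
    ENNReal.ofReal (π - x) * ∫⁻ t in Set.Ioo 0 x, ∫⁻ s in Set.Ioo 0 t, φ (t - s) * d s
      ≤ C * K := by
  set A : ℝ → ℝ≥0∞ := fun y => ∫⁻ u in Set.Ioo 0 y, φ u with hA
  have hAmono : Monotone A := fun a b hab => lintegral_mono_set (Set.Ioo_subset_Ioo le_rfl hab)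
  have hAmeas : Measurable A := hAmono.measurable
  have hAx : Measurable (fun s => A (x - s)) := hAmeas.comp (measurable_const.sub measurable_id)
  rw [lint_conv φ d hφ hd x,
    ← lintegral_const_mul' (ENNReal.ofReal (π - x)) _ ENNReal.ofReal_ne_top]
  have hsub : Set.Ioo (0:ℝ) x ⊆ Set.Ioo 0 π := Set.Ioo_subset_Ioo le_rfl hx.2.le
  have hCd' : ∀ᵐ s ∂(volume.restrict (Set.Ioo 0 x)), ENNReal.ofReal (π - s) * d s ≤ C :=
    ae_restrict_of_ae_restrict_of_subset hsub hCd
  have step : ∫⁻ s in Set.Ioo 0 x, ENNReal.ofReal (π - x) * (d s * A (x - s))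
      ≤ ∫⁻ s in Set.Ioo 0 x, C * A (x - s) := by
    refine lintegral_mono_ae ?_
    filter_upwards [hCd', ae_restrict_mem measurableSet_Ioo] with s hs hmem
    calc ENNReal.ofReal (π - x) * (d s * A (x - s))
        = (ENNReal.ofReal (π - x) * d s) * A (x - s) := by rw [mul_assoc]
      _ ≤ (ENNReal.ofReal (π - s) * d s) * A (x - s) := by
          have : ENNReal.ofReal (π - x) ≤ ENNReal.ofReal (π - s) :=
            ENNReal.ofReal_le_ofReal (by linarith [hmem.2])
          exact mul_le_mul' (mul_le_mul' this le_rfl) le_rfl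
      _ ≤ C * A (x - s) := mul_le_mul' hs le_rfl
  refine step.trans ?_
  rw [lintegral_const_mul C hAx]
  have hfin : ∫⁻ s in Set.Ioo 0 x, A (x - s) ≤ K := by
    rw [lint_reflect A x]
    have hwt : ∫⁻ y in Set.Ioo 0 x, A y
        = ∫⁻ u in Set.Ioo 0 x, ENNReal.ofReal (x - u) * φ u := lint_weight φ hφ x
    rw [hwt]
    exact hCS
  exact mul_le_mul' le_rfl hfin

lemma Wbound (r : ℝ) (f f₁ : ℝ → ℂ)
    (hae : ∀ᵐ u ∂(volume.restrict (Set.Ioo 0 π)), f u = f₁ u)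
    (h2 : Integrable (fun u => ((π - u) * ‖f u‖) ^ 2)
      (volume.restrict (Set.Ioo 0 π)))
    (hR : Real.sqrt (∫ u in Set.Ioo 0 π, ((π - u) * ‖f u‖) ^ 2) ≤ r) :
    ∫⁻ u in Set.Ioo 0 π, (ENNReal.ofReal (π - u) * (‖f₁ u‖₊ : ℝ≥0∞)) ^ (2:ℝ)
      ≤ ENNReal.ofReal (r ^ 2) := by
  set I := ∫ u in Set.Ioo 0 π, ((π - u) * ‖f u‖) ^ 2 with hI
  have hInn : 0 ≤ I := integral_nonneg fun u => sq_nonneg _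
  have hIr : I ≤ r ^ 2 := by
    have h := Real.sq_sqrt hInn
    nlinarith [Real.sqrt_nonneg I]
  have key : ∫⁻ u in Set.Ioo 0 π, (ENNReal.ofReal (π - u) * (‖f₁ u‖₊ : ℝ≥0∞)) ^ (2:ℝ)
      = ∫⁻ u in Set.Ioo 0 π, ENNReal.ofReal (((π - u) * ‖f u‖) ^ 2) := by
    refine lintegral_congr_ae ?_
    filter_upwards [hae, ae_restrict_mem measurableSet_Ioo] with u hu hmem
    have h1 : (0:ℝ) ≤ π - u := by linarith [hmem.2]
    have habs : ‖f u‖ = ‖f₁ u‖ := by rw [hu]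
    rw [habs, ← (id (ofReal_norm (f₁ u)) : ENNReal.ofReal ‖f₁ u‖ = (‖f₁ u‖₊ : ℝ≥0∞)), ← ENNReal.ofReal_mul h1, ENNReal.rpow_two,
      ← ENNReal.ofReal_pow (mul_nonneg h1 (norm_nonneg _))]
  rw [key, ← ofReal_integral_eq_lintegral_ofReal h2 (ae_of_all _ fun u => sq_nonneg _)]
  exact ENNReal.ofReal_le_ofReal hIr

lemma L2fin (r : ℝ) (f₁ : ℝ → ℂ)
    (hW : ∫⁻ u in Set.Ioo 0 π, (ENNReal.ofReal (π - u) * (‖f₁ u‖₊ : ℝ≥0∞)) ^ (2:ℝ)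
      ≤ ENNReal.ofReal (r ^ 2))
    {t : ℝ} (ht : t ∈ Set.Ioo (0:ℝ) π) :
    ∫⁻ u in Set.Ioo 0 t, ((‖f₁ u‖₊ : ℝ≥0∞)) ^ (2:ℝ) < ⊤ := by
  set c : ℝ≥0∞ := ENNReal.ofReal ((π - t) ^ 2) with hc
  have hπt : (0:ℝ) < π - t := by linarith [ht.2]
  have hc0 : c ≠ 0 := by
    simp [hc, ENNReal.ofReal_eq_zero]
    positivity
  have hct : c ≠ ⊤ := ENNReal.ofReal_ne_top
  have hsub : Set.Ioo (0:ℝ) t ⊆ Set.Ioo 0 π := Set.Ioo_subset_Ioo le_rfl ht.2.le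
  have step : (∫⁻ u in Set.Ioo 0 t, ((‖f₁ u‖₊ : ℝ≥0∞)) ^ (2:ℝ)) * c
      ≤ ENNReal.ofReal (r ^ 2) := by
    rw [← lintegral_mul_const' c _ hct]
    refine le_trans ?_ ((lintegral_mono_set hsub).trans hW)
    refine setLIntegral_mono' measurableSet_Ioo ?_
    intro u hu
    have h1 : (0:ℝ) ≤ π - u := by linarith [hu.2, ht.2]
    have h2 : π - t ≤ π - u := by linarith [hu.2]
    calc (‖f₁ u‖₊ : ℝ≥0∞) ^ (2:ℝ) * c
        = (‖f₁ u‖₊ : ℝ≥0∞) ^ (2:ℝ) * (ENNReal.ofReal (π - t)) ^ (2:ℝ) := by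
          simp [hc, ENNReal.rpow_two, ENNReal.ofReal_pow hπt.le]
      _ ≤ (‖f₁ u‖₊ : ℝ≥0∞) ^ (2:ℝ) * (ENNReal.ofReal (π - u)) ^ (2:ℝ) :=
          mul_le_mul' le_rfl (ENNReal.rpow_le_rpow (ENNReal.ofReal_le_ofReal h2)
            (by norm_num))
      _ = (ENNReal.ofReal (π - u) * (‖f₁ u‖₊ : ℝ≥0∞)) ^ (2:ℝ) := by
          rw [ENNReal.mul_rpow_of_nonneg _ _ (by norm_num : (0:ℝ) ≤ 2), mul_comm]
  have hdiv := (ENNReal.le_div_iff_mul_le (Or.inl hc0) (Or.inl hct)).mpr step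
  exact lt_of_le_of_lt hdiv (ENNReal.div_lt_top ENNReal.ofReal_ne_top hc0)

lemma conv_enorm_bound (f g : ℝ → ℂ) (hf : Measurable f) (hg : Measurable g) (t : ℝ) :
    ∫⁻ s in Set.Ioo 0 t, (‖f (t - s)‖₊ : ℝ≥0∞) * (‖g s‖₊ : ℝ≥0∞)
      ≤ (∫⁻ u in Set.Ioo 0 t, ((‖f u‖₊ : ℝ≥0∞)) ^ (2:ℝ)) ^ (1/(2:ℝ))
        * (∫⁻ u in Set.Ioo 0 t, ((‖g u‖₊ : ℝ≥0∞)) ^ (2:ℝ)) ^ (1/(2:ℝ)) := by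
  have hconj : Real.HolderConjugate 2 2 := ⟨by norm_num, by norm_num, by norm_num⟩
  have h1 : AEMeasurable (fun s => (‖f (t - s)‖₊ : ℝ≥0∞)) (volume.restrict (Set.Ioo 0 t)) :=
    ((hf.comp (measurable_const.sub measurable_id)).enorm).aemeasurable
  have h2 : AEMeasurable (fun s => (‖g s‖₊ : ℝ≥0∞)) (volume.restrict (Set.Ioo 0 t)) :=
    hg.enorm.aemeasurable
  have hH := ENNReal.lintegral_mul_le_Lp_mul_Lq (volume.restrict (Set.Ioo 0 t)) hconj h1 h2
  refine le_trans (le_of_eq ?_) (hH.trans ?_)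
  · rfl
  have hrefl : ∫⁻ s in Set.Ioo 0 t, (‖f (t - s)‖₊ : ℝ≥0∞) ^ (2:ℝ)
      = ∫⁻ u in Set.Ioo 0 t, (‖f u‖₊ : ℝ≥0∞) ^ (2:ℝ) :=
    lint_reflect (fun u => (‖f u‖₊ : ℝ≥0∞) ^ (2:ℝ)) t
  rw [hrefl]

lemma conv_integrable (f g : ℝ → ℂ) (hf : Measurable f) (hg : Measurable g) (t : ℝ)
    (hf2 : ∫⁻ u in Set.Ioo 0 t, ((‖f u‖₊ : ℝ≥0∞)) ^ (2:ℝ) < ⊤)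
    (hg2 : ∫⁻ u in Set.Ioo 0 t, ((‖g u‖₊ : ℝ≥0∞)) ^ (2:ℝ) < ⊤) :
    IntegrableOn (fun s => f (t - s) * g s) (Set.Ioc 0 t) := by
  constructor
  · exact ((hf.comp (measurable_const.sub measurable_id)).mul hg).aestronglyMeasurable
  · rw [hasFiniteIntegral_def]
    have hioo : volume.restrict (Set.Ioc (0:ℝ) t) = volume.restrict (Set.Ioo (0:ℝ) t) :=
      (Measure.restrict_congr_set Ioo_ae_eq_Ioc).symm
    rw [hioo]
    have heq : ∫⁻ s in Set.Ioo 0 t, (‖f (t - s) * g s‖₊ : ℝ≥0∞)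
        = ∫⁻ s in Set.Ioo 0 t, (‖f (t - s)‖₊ : ℝ≥0∞) * (‖g s‖₊ : ℝ≥0∞) := by
      simp [nnnorm_mul, ENNReal.coe_mul]
    calc ∫⁻ s in Set.Ioo 0 t, (‖f (t - s) * g s‖₊ : ℝ≥0∞)
        ≤ (∫⁻ u in Set.Ioo 0 t, ((‖f u‖₊ : ℝ≥0∞)) ^ (2:ℝ)) ^ (1/(2:ℝ))
          * (∫⁻ u in Set.Ioo 0 t, ((‖g u‖₊ : ℝ≥0∞)) ^ (2:ℝ)) ^ (1/(2:ℝ)) := by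
          rw [heq]; exact conv_enorm_bound f g hf hg t
      _ < ⊤ := ENNReal.mul_lt_top
          (ENNReal.rpow_lt_top_of_nonneg (by norm_num) hf2.ne)
          (ENNReal.rpow_lt_top_of_nonneg (by norm_num) hg2.ne)

lemma F_aesm (f g : ℝ → ℂ) (hf : Measurable f) (hg : Measurable g) (x : ℝ) :
    AEStronglyMeasurable (fun t => ∫ s in (0:ℝ)..t, f (t - s) * g s)
      (volume.restrict (Set.Ioc 0 x)) := by
  have hSmeas : MeasurableSet {p : ℝ × ℝ | 0 < p.2 ∧ p.2 ≤ p.1} :=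
    (measurableSet_lt measurable_const measurable_snd).inter
      (measurableSet_le measurable_snd measurable_fst)
  set G : ℝ → ℂ := fun t => ∫ s, ({p : ℝ × ℝ | 0 < p.2 ∧ p.2 ≤ p.1}.indicator
    (fun p => f (p.1 - p.2) * g p.2)) (t, s) with hG
  have hGsm : StronglyMeasurable G := by
    apply MeasureTheory.StronglyMeasurable.integral_prod_right'
    exact (((hf.comp (measurable_fst.sub measurable_snd)).mul
      (hg.comp measurable_snd)).indicator hSmeas).stronglyMeasurable
  refine hGsm.aestronglyMeasurable.congr ?_
  refine (ae_restrict_iff' measurableSet_Ioc).mpr (ae_of_all _ ?_)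
  intro t ht
  rw [hG]
  show (∫ s, ({p : ℝ × ℝ | 0 < p.2 ∧ p.2 ≤ p.1}.indicator
    (fun p => f (p.1 - p.2) * g p.2)) (t, s)) = ∫ s in (0:ℝ)..t, f (t - s) * g s
  rw [intervalIntegral.integral_of_le ht.1.le, ← MeasureTheory.integral_indicator
    measurableSet_Ioc]
  congr 1

lemma F_II (f g : ℝ → ℂ) (hf : Measurable f) (hg : Measurable g) {x : ℝ}
    (hx : x ∈ Set.Ioo (0:ℝ) π)
    (hf2 : ∫⁻ u in Set.Ioo 0 x, ((‖f u‖₊ : ℝ≥0∞)) ^ (2:ℝ) < ⊤)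
    (hg2 : ∫⁻ u in Set.Ioo 0 x, ((‖g u‖₊ : ℝ≥0∞)) ^ (2:ℝ) < ⊤) :
    IntervalIntegrable (fun t => ∫ s in (0:ℝ)..t, f (t - s) * g s) volume 0 x := by
  rw [intervalIntegrable_iff, Set.uIoc_of_le hx.1.le]
  set B : ℝ≥0∞ := (∫⁻ u in Set.Ioo 0 x, ((‖f u‖₊ : ℝ≥0∞)) ^ (2:ℝ)) ^ (1/(2:ℝ))
    * (∫⁻ u in Set.Ioo 0 x, ((‖g u‖₊ : ℝ≥0∞)) ^ (2:ℝ)) ^ (1/(2:ℝ)) with hB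
  have hBfin : B < ⊤ := ENNReal.mul_lt_top
    (ENNReal.rpow_lt_top_of_nonneg (by norm_num) hf2.ne)
    (ENNReal.rpow_lt_top_of_nonneg (by norm_num) hg2.ne)
  refine ⟨F_aesm f g hf hg x, ?_⟩
  rw [hasFiniteIntegral_def]
  have hbound : ∀ t ∈ Set.Ioc (0:ℝ) x,
      (‖∫ s in (0:ℝ)..t, f (t - s) * g s‖₊ : ℝ≥0∞) ≤ B := by
    intro t ht
    rw [intervalIntegral.integral_of_le ht.1.le]
    refine le_trans (enorm_integral_le_lintegral_enorm _) ?_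
    simp only [enorm_eq_nnnorm]
    rw [show volume.restrict (Set.Ioc (0:ℝ) t) = volume.restrict (Set.Ioo (0:ℝ) t) from
      (Measure.restrict_congr_set Ioo_ae_eq_Ioc).symm]
    have heq : ∫⁻ s in Set.Ioo 0 t, (‖f (t - s) * g s‖₊ : ℝ≥0∞)
        = ∫⁻ s in Set.Ioo 0 t, (‖f (t - s)‖₊ : ℝ≥0∞) * (‖g s‖₊ : ℝ≥0∞) := by
      simp [nnnorm_mul, ENNReal.coe_mul]
    rw [heq]
    refine le_trans (conv_enorm_bound f g hf hg t) ?_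
    rw [hB]
    have hsub : Set.Ioo (0:ℝ) t ⊆ Set.Ioo 0 x := Set.Ioo_subset_Ioo le_rfl ht.2
    exact mul_le_mul'
      (ENNReal.rpow_le_rpow (lintegral_mono_set hsub) (by norm_num))
      (ENNReal.rpow_le_rpow (lintegral_mono_set hsub) (by norm_num))
  calc ∫⁻ t in Set.Ioc 0 x, (‖∫ s in (0:ℝ)..t, f (t - s) * g s‖₊ : ℝ≥0∞)
      ≤ ∫⁻ _ in Set.Ioc 0 x, B := setLIntegral_mono' measurableSet_Ioc hbound
    _ = B * volume (Set.Ioc 0 x) := setLIntegral_const _ _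
    _ < ⊤ := ENNReal.mul_lt_top hBfin (by simp [Real.volume_Ioc])

lemma F_diff_bound (f ft : ℝ → ℂ) (hf : Measurable f) (hft : Measurable ft) {t : ℝ}
    (ht : 0 < t)
    (hf2 : ∫⁻ u in Set.Ioo 0 t, ((‖f u‖₊ : ℝ≥0∞)) ^ (2:ℝ) < ⊤)
    (hft2 : ∫⁻ u in Set.Ioo 0 t, ((‖ft u‖₊ : ℝ≥0∞)) ^ (2:ℝ) < ⊤) :
    (‖(∫ s in (0:ℝ)..t, f (t - s) * f s) - ∫ s in (0:ℝ)..t, ft (t - s) * ft s‖₊ : ℝ≥0∞)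
      ≤ ∫⁻ s in Set.Ioo 0 t,
          ((‖f (t - s)‖₊ : ℝ≥0∞) + (‖ft (t - s)‖₊ : ℝ≥0∞)) * (‖f s - ft s‖₊ : ℝ≥0∞) := by
  have hint1 : IntegrableOn (fun s => f (t - s) * f s) (Set.Ioc 0 t) :=
    conv_integrable f f hf hf t hf2 hf2
  have hint2 : IntegrableOn (fun s => ft (t - s) * ft s) (Set.Ioc 0 t) :=
    conv_integrable ft ft hft hft t hft2 hft2
  rw [intervalIntegral.integral_of_le ht.le, intervalIntegral.integral_of_le ht.le,
    ← MeasureTheory.integral_sub hint1 hint2]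
  refine le_trans (enorm_integral_le_lintegral_enorm _) ?_
  rw [show volume.restrict (Set.Ioc (0:ℝ) t) = volume.restrict (Set.Ioo (0:ℝ) t) from
    (Measure.restrict_congr_set Ioo_ae_eq_Ioc).symm]
  have hptwise : ∀ s : ℝ, (‖f (t - s) * f s - ft (t - s) * ft s‖₊ : ℝ≥0∞)
      ≤ (‖f (t - s)‖₊ : ℝ≥0∞) * (‖f s - ft s‖₊ : ℝ≥0∞)
        + (‖f (t - s) - ft (t - s)‖₊ : ℝ≥0∞) * (‖ft s‖₊ : ℝ≥0∞) := by
    intro s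
    have hdecomp : f (t - s) * f s - ft (t - s) * ft s
        = f (t - s) * (f s - ft s) + (f (t - s) - ft (t - s)) * ft s := by ring
    rw [hdecomp]
    calc (‖f (t - s) * (f s - ft s) + (f (t - s) - ft (t - s)) * ft s‖₊ : ℝ≥0∞)
        ≤ (‖f (t - s) * (f s - ft s)‖₊ : ℝ≥0∞)
          + (‖(f (t - s) - ft (t - s)) * ft s‖₊ : ℝ≥0∞) := by
          exact_mod_cast nnnorm_add_le _ _
      _ = (‖f (t - s)‖₊ : ℝ≥0∞) * (‖f s - ft s‖₊ : ℝ≥0∞)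
          + (‖f (t - s) - ft (t - s)‖₊ : ℝ≥0∞) * (‖ft s‖₊ : ℝ≥0∞) := by
          simp [nnnorm_mul, ENNReal.coe_mul]
  have hm1 : Measurable (fun s : ℝ => (‖f (t - s)‖₊ : ℝ≥0∞) * (‖f s - ft s‖₊ : ℝ≥0∞)) :=
    ((hf.comp (measurable_const.sub measurable_id)).enorm).mul (hf.sub hft).enorm
  have hrefl : ∫⁻ s in Set.Ioo 0 t,
      (‖f (t - s) - ft (t - s)‖₊ : ℝ≥0∞) * (‖ft s‖₊ : ℝ≥0∞)
      = ∫⁻ s in Set.Ioo 0 t, (‖ft (t - s)‖₊ : ℝ≥0∞) * (‖f s - ft s‖₊ : ℝ≥0∞) :=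
    lint_reflect2 (fun u => (‖f u - ft u‖₊ : ℝ≥0∞)) (fun u => (‖ft u‖₊ : ℝ≥0∞)) t
  have hsplit : ∫⁻ s in Set.Ioo 0 t,
      ((‖f (t - s)‖₊ : ℝ≥0∞) + (‖ft (t - s)‖₊ : ℝ≥0∞)) * (‖f s - ft s‖₊ : ℝ≥0∞)
      = (∫⁻ s in Set.Ioo 0 t, (‖f (t - s)‖₊ : ℝ≥0∞) * (‖f s - ft s‖₊ : ℝ≥0∞))
        + ∫⁻ s in Set.Ioo 0 t, (‖ft (t - s)‖₊ : ℝ≥0∞) * (‖f s - ft s‖₊ : ℝ≥0∞) := by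
    have heq : ∀ s : ℝ, ((‖f (t - s)‖₊ : ℝ≥0∞) + (‖ft (t - s)‖₊ : ℝ≥0∞))
        * (‖f s - ft s‖₊ : ℝ≥0∞)
        = (‖f (t - s)‖₊ : ℝ≥0∞) * (‖f s - ft s‖₊ : ℝ≥0∞)
          + (‖ft (t - s)‖₊ : ℝ≥0∞) * (‖f s - ft s‖₊ : ℝ≥0∞) := fun s => add_mul _ _ _
    simp_rw [heq]
    exact lintegral_add_left hm1 _
  calc ∫⁻ s in Set.Ioo 0 t, (‖f (t - s) * f s - ft (t - s) * ft s‖₊ : ℝ≥0∞)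
      ≤ ∫⁻ s in Set.Ioo 0 t, ((‖f (t - s)‖₊ : ℝ≥0∞) * (‖f s - ft s‖₊ : ℝ≥0∞)
          + (‖f (t - s) - ft (t - s)‖₊ : ℝ≥0∞) * (‖ft s‖₊ : ℝ≥0∞)) :=
        lintegral_mono fun s => hptwise s
    _ = (∫⁻ s in Set.Ioo 0 t, (‖f (t - s)‖₊ : ℝ≥0∞) * (‖f s - ft s‖₊ : ℝ≥0∞))
        + ∫⁻ s in Set.Ioo 0 t, (‖f (t - s) - ft (t - s)‖₊ : ℝ≥0∞) * (‖ft s‖₊ : ℝ≥0∞) :=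
        lintegral_add_left hm1 _
    _ = (∫⁻ s in Set.Ioo 0 t, (‖f (t - s)‖₊ : ℝ≥0∞) * (‖f s - ft s‖₊ : ℝ≥0∞))
        + ∫⁻ s in Set.Ioo 0 t, (‖ft (t - s)‖₊ : ℝ≥0∞) * (‖f s - ft s‖₊ : ℝ≥0∞) := by
        rw [hrefl]
    _ = ∫⁻ s in Set.Ioo 0 t,
        ((‖f (t - s)‖₊ : ℝ≥0∞) + (‖ft (t - s)‖₊ : ℝ≥0∞)) * (‖f s - ft s‖₊ : ℝ≥0∞) :=
        hsplit.symm

end Stmt15Helpers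

open Stmt15Helpers in
theorem stmt_15 (r : ℝ) (hr : 0 < r) (N Nt M Mt : ℝ → ℂ)
    (hNint : MeasureTheory.IntegrableOn N (Set.Ioo 0 π))
    (hNtint : MeasureTheory.IntegrableOn Nt (Set.Ioo 0 π))
    (hNr : Real.sqrt (∫ x in Set.Ioo 0 π, ((π - x) * ‖N x‖) ^ 2) ≤ r)
    (hNtr : Real.sqrt (∫ x in Set.Ioo 0 π, ((π - x) * ‖Nt x‖) ^ 2) ≤ r)
    (hN2 : MeasureTheory.Integrable
      (fun x => ((π - x) * ‖N x‖) ^ 2) (volume.restrict (Set.Ioo 0 π)))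
    (hNt2 : MeasureTheory.Integrable
      (fun x => ((π - x) * ‖Nt x‖) ^ 2) (volume.restrict (Set.Ioo 0 π)))
    (hM : ∀ x ∈ Set.Ioo (0 : ℝ) π,
      M x = 2 * N x - ∫ t in (0 : ℝ)..x, ∫ s in (0 : ℝ)..t, N (t - s) * N s)
    (hMt : ∀ x ∈ Set.Ioo (0 : ℝ) π,
      Mt x = 2 * Nt x - ∫ t in (0 : ℝ)..x, ∫ s in (0 : ℝ)..t, Nt (t - s) * Nt s) :
    eLpNorm (fun x => (π - x) * (M x - Mt x)) ⊤ (volume.restrict (Set.Ioo 0 π)) ≤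
      ENNReal.ofReal (2 * (1 + r * Real.sqrt π)) *
        eLpNorm (fun x => (π - x) * (N x - Nt x)) ⊤ (volume.restrict (Set.Ioo 0 π)) := by
  have hπ : (0:ℝ) < π := Real.pi_pos
  -- measurable representatives
  have hNm : AEMeasurable N (volume.restrict (Set.Ioo 0 π)) := hNint.aemeasurable
  have hNtm : AEMeasurable Nt (volume.restrict (Set.Ioo 0 π)) := hNtint.aemeasurable
  set N₁ : ℝ → ℂ := (Set.Ioo (0:ℝ) π).indicator (hNm.mk N) with hN₁def
  set Nt₁ : ℝ → ℂ := (Set.Ioo (0:ℝ) π).indicator (hNtm.mk Nt) with hNt₁def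
  have hN₁meas : Measurable N₁ := hNm.measurable_mk.indicator measurableSet_Ioo
  have hNt₁meas : Measurable Nt₁ := hNtm.measurable_mk.indicator measurableSet_Ioo
  have hNae : ∀ᵐ u ∂(volume.restrict (Set.Ioo 0 π)), N u = N₁ u := by
    filter_upwards [hNm.ae_eq_mk, ae_restrict_mem measurableSet_Ioo] with u h1 h2
    rw [h1, hN₁def, Set.indicator_of_mem h2]
  have hNtae : ∀ᵐ u ∂(volume.restrict (Set.Ioo 0 π)), Nt u = Nt₁ u := by
    filter_upwards [hNtm.ae_eq_mk, ae_restrict_mem measurableSet_Ioo] with u h1 h2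
    rw [h1, hNt₁def, Set.indicator_of_mem h2]
  have hNae' : ∀ᵐ u ∂volume, u ∈ Set.Ioo 0 π → N u = N₁ u :=
    (ae_restrict_iff' measurableSet_Ioo).mp hNae
  have hNtae' : ∀ᵐ u ∂volume, u ∈ Set.Ioo 0 π → Nt u = Nt₁ u :=
    (ae_restrict_iff' measurableSet_Ioo).mp hNtae
  -- weighted L² bounds
  have hWN : ∫⁻ u in Set.Ioo 0 π, (ENNReal.ofReal (π - u) * (‖N₁ u‖₊ : ℝ≥0∞)) ^ (2:ℝ)
      ≤ ENNReal.ofReal (r ^ 2) := Wbound r N N₁ hNae hN2 hNr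
  have hWNt : ∫⁻ u in Set.Ioo 0 π, (ENNReal.ofReal (π - u) * (‖Nt₁ u‖₊ : ℝ≥0∞)) ^ (2:ℝ)
      ≤ ENNReal.ofReal (r ^ 2) := Wbound r Nt Nt₁ hNtae hNt2 hNtr
  rw [eLpNorm_exponent_top, eLpNorm_exponent_top]
  set C := eLpNormEssSup (fun x => (π - x) * (N x - Nt x)) (volume.restrict (Set.Ioo 0 π))
    with hCdef
  -- the weighted bound on the difference
  set d : ℝ → ℝ≥0∞ := fun s => ((‖N₁ s - Nt₁ s‖₊ : ℝ≥0∞)) with hddef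
  have hdmeas : Measurable d := (hN₁meas.sub hNt₁meas).enorm
  have hDb : ∀ᵐ s ∂(volume.restrict (Set.Ioo 0 π)), ENNReal.ofReal (π - s) * d s ≤ C := by
    filter_upwards [enorm_ae_le_eLpNormEssSup
      (fun x => (π - x) * (N x - Nt x)) (volume.restrict (Set.Ioo 0 π)),
      hNae, hNtae, ae_restrict_mem measurableSet_Ioo] with s h1 h2 h3 h4
    have h5 : (‖((π : ℂ) - (s : ℂ)) * (N s - Nt s)‖₊ : ℝ≥0∞)
        = ENNReal.ofReal (π - s) * d s := by
      rw [show ((π : ℂ) - (s : ℂ)) = ((π - s : ℝ) : ℂ) by push_cast; ring,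
        nnnorm_mul, ENNReal.coe_mul, Complex.nnnorm_real,
        (id (Real.enorm_eq_ofReal (by linarith [h4.2] : (0:ℝ) ≤ π - s)) :
          (‖π - s‖₊ : ℝ≥0∞) = _), hddef]
      simp only [h2, h3]
    rw [← h5]
    exact h1
  -- φ and its Cauchy–Schwarz bound
  set φ : ℝ → ℝ≥0∞ := fun u => ((‖N₁ u‖₊ : ℝ≥0∞)) + ((‖Nt₁ u‖₊ : ℝ≥0∞)) with hφdef
  have hφmeas : Measurable φ := hN₁meas.enorm.add hNt₁meas.enorm
  have hCSφ : ∀ x ∈ Set.Ioo (0:ℝ) π,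
      ∫⁻ u in Set.Ioo 0 x, ENNReal.ofReal (x - u) * φ u
        ≤ 2 * ENNReal.ofReal (r * Real.sqrt π) := by
    intro x hx
    have hsplit : ∫⁻ u in Set.Ioo 0 x, ENNReal.ofReal (x - u) * φ u
        = (∫⁻ u in Set.Ioo 0 x, ENNReal.ofReal (x - u) * ((‖N₁ u‖₊ : ℝ≥0∞)))
          + ∫⁻ u in Set.Ioo 0 x, ENNReal.ofReal (x - u) * ((‖Nt₁ u‖₊ : ℝ≥0∞)) := by
      have heq : ∀ u : ℝ, ENNReal.ofReal (x - u) * φ u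
          = ENNReal.ofReal (x - u) * ((‖N₁ u‖₊ : ℝ≥0∞))
            + ENNReal.ofReal (x - u) * ((‖Nt₁ u‖₊ : ℝ≥0∞)) := fun u => mul_add _ _ _
      simp_rw [heq]
      exact lintegral_add_left ((ENNReal.measurable_ofReal.comp
        (measurable_const.sub measurable_id)).mul hN₁meas.enorm) _
    rw [hsplit, two_mul]
    exact add_le_add (lint_CS r hr.le _ hN₁meas.enorm.aemeasurable hWN hx)
      (lint_CS r hr.le _ hNt₁meas.enorm.aemeasurable hWNt hx)
  -- congruence of the double integrals
  have hFeqgen : ∀ (f f₁ : ℝ → ℂ), (∀ᵐ u ∂volume, u ∈ Set.Ioo 0 π → f u = f₁ u) →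
      ∀ x ∈ Set.Ioo (0:ℝ) π, (∫ t in (0:ℝ)..x, ∫ s in (0:ℝ)..t, f (t - s) * f s)
        = ∫ t in (0:ℝ)..x, ∫ s in (0:ℝ)..t, f₁ (t - s) * f₁ s := by
    intro f f₁ hae x hx
    refine intervalIntegral.integral_congr_ae ?_
    rw [Set.uIoc_of_le hx.1.le]
    refine ae_of_all _ ?_
    intro t ht
    have htS : t ∈ Set.Ioo (0:ℝ) π := ⟨ht.1, lt_of_le_of_lt ht.2 hx.2⟩
    refine intervalIntegral.integral_congr_ae ?_
    rw [Set.uIoc_of_le ht.1.le]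
    have hshift : ∀ᵐ s ∂volume, (t - s) ∈ Set.Ioo (0:ℝ) π → f (t - s) = f₁ (t - s) :=
      (Measure.measurePreserving_sub_left volume t).quasiMeasurePreserving.ae hae
    have hne : ∀ᵐ s ∂volume, s ≠ t := by
      have hsingle : {s : ℝ | ¬ s ≠ t} = {t} := by ext u; simp
      rw [ae_iff, hsingle]
      exact Real.volume_singleton
    filter_upwards [hae, hshift, hne] with s h1 h2 h3 hs
    have hst : s < t := lt_of_le_of_ne hs.2 h3
    have hsS : s ∈ Set.Ioo (0:ℝ) π := ⟨hs.1, hst.trans htS.2⟩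
    have htsS : (t - s) ∈ Set.Ioo (0:ℝ) π := ⟨by linarith, by linarith [htS.2, hs.1]⟩
    rw [h1 hsS, h2 htsS]
  -- the main a.e. bound
  have hbound : ∀ᵐ y ∂(volume.restrict (Set.Ioo 0 π)),
      ((‖(↑(π - y) : ℂ) * (M y - Mt y)‖₊ : ℝ≥0∞))
        ≤ ENNReal.ofReal (2 * (1 + r * Real.sqrt π)) * C := by
    filter_upwards [ae_restrict_mem measurableSet_Ioo, hDb, hNae, hNtae]
      with x hx hDx hNx hNtx
    have hfinN : ∫⁻ u in Set.Ioo 0 x, ((‖N₁ u‖₊ : ℝ≥0∞)) ^ (2:ℝ) < ⊤ := L2fin r N₁ hWN hx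
    have hfinNt : ∫⁻ u in Set.Ioo 0 x, ((‖Nt₁ u‖₊ : ℝ≥0∞)) ^ (2:ℝ) < ⊤ :=
      L2fin r Nt₁ hWNt hx
    have hII1 : IntervalIntegrable (fun t => ∫ s in (0:ℝ)..t, N₁ (t - s) * N₁ s) volume 0 x :=
      F_II N₁ N₁ hN₁meas hN₁meas hx hfinN hfinN
    have hII2 : IntervalIntegrable (fun t => ∫ s in (0:ℝ)..t, Nt₁ (t - s) * Nt₁ s)
        volume 0 x := F_II Nt₁ Nt₁ hNt₁meas hNt₁meas hx hfinNt hfinNt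
    have hMM : M x - Mt x = 2 * (N₁ x - Nt₁ x)
        - ∫ t in (0:ℝ)..x, ((∫ s in (0:ℝ)..t, N₁ (t - s) * N₁ s)
            - ∫ s in (0:ℝ)..t, Nt₁ (t - s) * Nt₁ s) := by
      rw [hM x hx, hMt x hx, hFeqgen N N₁ hNae' x hx, hFeqgen Nt Nt₁ hNtae' x hx,
        intervalIntegral.integral_sub hII1 hII2, hNx, hNtx]
      ring
    have hwx : (0:ℝ) ≤ π - x := by linarith [hx.2]
    have hcoe : ∀ z : ℂ, ((‖(↑(π - x) : ℂ) * z‖₊ : ℝ≥0∞))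
        = ENNReal.ofReal (π - x) * ((‖z‖₊ : ℝ≥0∞)) := by
      intro z
      rw [nnnorm_mul, ENNReal.coe_mul, Complex.nnnorm_real, (id (Real.enorm_eq_ofReal hwx) : (‖π - x‖₊ : ℝ≥0∞) = _)]
    -- the double-integral term
    have hJ : ∫⁻ t in Set.Ioo 0 x, ((‖(∫ s in (0:ℝ)..t, N₁ (t - s) * N₁ s)
          - ∫ s in (0:ℝ)..t, Nt₁ (t - s) * Nt₁ s‖₊ : ℝ≥0∞))
        ≤ ∫⁻ t in Set.Ioo 0 x, ∫⁻ s in Set.Ioo 0 t, φ (t - s) * d s := by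
      refine setLIntegral_mono' measurableSet_Ioo ?_
      intro t ht
      have hsub : Set.Ioo (0:ℝ) t ⊆ Set.Ioo 0 x := Set.Ioo_subset_Ioo le_rfl ht.2.le
      have h1 := lt_of_le_of_lt (lintegral_mono_set hsub) hfinN
      have h2 := lt_of_le_of_lt (lintegral_mono_set hsub) hfinNt
      exact F_diff_bound N₁ Nt₁ hN₁meas hNt₁meas ht.1 h1 h2
    have hconv := conv_bound (2 * ENNReal.ofReal (r * Real.sqrt π)) C φ d hφmeas hdmeas
      hDb (hCSφ x hx) hx
    have hterm2 : ENNReal.ofReal (π - x) * ((‖∫ t in (0:ℝ)..x,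
        ((∫ s in (0:ℝ)..t, N₁ (t - s) * N₁ s)
          - ∫ s in (0:ℝ)..t, Nt₁ (t - s) * Nt₁ s)‖₊ : ℝ≥0∞))
        ≤ C * (2 * ENNReal.ofReal (r * Real.sqrt π)) := by
      refine le_trans (mul_le_mul' le_rfl ?_) hconv
      rw [intervalIntegral.integral_of_le hx.1.le]
      refine le_trans (enorm_integral_le_lintegral_enorm _) ?_
      rw [show volume.restrict (Set.Ioc (0:ℝ) x) = volume.restrict (Set.Ioo (0:ℝ) x) from
        (Measure.restrict_congr_set Ioo_ae_eq_Ioc).symm]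
      exact hJ
    have hsplitnorm : ((‖M x - Mt x‖₊ : ℝ≥0∞))
        ≤ 2 * d x + ((‖∫ t in (0:ℝ)..x, ((∫ s in (0:ℝ)..t, N₁ (t - s) * N₁ s)
            - ∫ s in (0:ℝ)..t, Nt₁ (t - s) * Nt₁ s)‖₊ : ℝ≥0∞)) := by
      rw [hMM]
      have h2n : ((‖(2:ℂ)‖₊ : ℝ≥0∞)) = 2 := by
        rw [← (id (ofReal_norm (2:ℂ)) : ENNReal.ofReal ‖(2:ℂ)‖ = (‖(2:ℂ)‖₊ : ℝ≥0∞))]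
        norm_num
      calc ((‖2 * (N₁ x - Nt₁ x) - ∫ t in (0:ℝ)..x, ((∫ s in (0:ℝ)..t, N₁ (t - s) * N₁ s)
            - ∫ s in (0:ℝ)..t, Nt₁ (t - s) * Nt₁ s)‖₊ : ℝ≥0∞))
          ≤ ((‖2 * (N₁ x - Nt₁ x)‖₊ : ℝ≥0∞))
            + ((‖∫ t in (0:ℝ)..x, ((∫ s in (0:ℝ)..t, N₁ (t - s) * N₁ s)
              - ∫ s in (0:ℝ)..t, Nt₁ (t - s) * Nt₁ s)‖₊ : ℝ≥0∞)) := by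
            exact_mod_cast nnnorm_sub_le _ _
        _ = 2 * d x + ((‖∫ t in (0:ℝ)..x, ((∫ s in (0:ℝ)..t, N₁ (t - s) * N₁ s)
              - ∫ s in (0:ℝ)..t, Nt₁ (t - s) * Nt₁ s)‖₊ : ℝ≥0∞)) := by
            congr 1
            rw [nnnorm_mul, ENNReal.coe_mul, h2n, hddef]
    calc ((‖(↑(π - x) : ℂ) * (M x - Mt x)‖₊ : ℝ≥0∞))
        = ENNReal.ofReal (π - x) * ((‖M x - Mt x‖₊ : ℝ≥0∞)) := hcoe _
      _ ≤ ENNReal.ofReal (π - x) * (2 * d x + _) := mul_le_mul' le_rfl hsplitnorm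
      _ = 2 * (ENNReal.ofReal (π - x) * d x) + ENNReal.ofReal (π - x) * _ := by ring
      _ ≤ 2 * C + C * (2 * ENNReal.ofReal (r * Real.sqrt π)) :=
          add_le_add (mul_le_mul' le_rfl hDx) hterm2
      _ = ENNReal.ofReal (2 * (1 + r * Real.sqrt π)) * C := by
          have hcst : ENNReal.ofReal (2 * (1 + r * Real.sqrt π))
              = 2 + 2 * ENNReal.ofReal (r * Real.sqrt π) := by
            rw [show (2:ℝ) * (1 + r * Real.sqrt π) = 2 + 2 * (r * Real.sqrt π) by ring,
              ENNReal.ofReal_add (by norm_num) (by positivity),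
              ENNReal.ofReal_mul (by norm_num)]
            norm_num
          rw [hcst]
          ring
  refine essSup_le_of_ae_le _ ?_
  filter_upwards [hbound] with y hy
  simpa [enorm_eq_nnnorm] using hy
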